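/- Let (Y_n)_{n≥-2} be i.i.d. uniform on [0,1], and define Z_{n,1} = max{Y_n, Y_{n-2}, Y_{n-3}} and Z_{n,2} = Y_n. For u_{n,1} = 1 - τ'_1/n and u_{n,2} = 1 - τ'_2/n with τ'_1, τ'_2 > 0, the limit as n → ∞ of n·P(Z_{1,1} ≤ u_{n,1} < Z_{2,1}, Z_{1,2} ≤ u_{n,2} < Z_{2,2}) equals min{τ'_1, τ'_2} > 0. -/

import Mathlib

open MeasureTheory ProbabilityTheory Filter Set

theorem stmt3
    {Ω : Type*} [MeasurableSpace Ω] (P : Measure Ω) [IsProbabilityMeasure P]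
    (Y : ℤ → Ω → ℝ) (hYm : ∀ i, Measurable (Y i))
    (hIndep : iIndepFun Y P)
    (hUnif : ∀ i, Measure.map (Y i) P = volume.restrict (Icc (0:ℝ) 1))
    (τ'₁ τ'₂ : ℝ) (hτ₁ : 0 < τ'₁) (hτ₂ : 0 < τ'₂)
    (Z₁ Z₂ : ℕ → Ω → ℝ)
    (hZ₁ : ∀ i : ℕ, Z₁ i = fun ω => max (Y i ω) (max (Y ((i:ℤ) - 2) ω) (Y ((i:ℤ) - 3) ω)))
    (hZ₂ : ∀ i : ℕ, Z₂ i = fun ω => Y i ω)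
    (u₁ u₂ : ℕ → ℝ) (hu₁ : ∀ n : ℕ, u₁ n = 1 - τ'₁ / n) (hu₂ : ∀ n : ℕ, u₂ n = 1 - τ'₂ / n) :
    Tendsto (fun n : ℕ => (n : ℝ) *
        (P {ω | (Z₁ 1 ω ≤ u₁ n ∧ u₁ n < Z₁ 2 ω) ∧ (Z₂ 1 ω ≤ u₂ n ∧ u₂ n < Z₂ 2 ω)}).toReal)
      atTop (nhds (min τ'₁ τ'₂)) ∧ 0 < min τ'₁ τ'₂ := by
  constructor
  swap
  · exact lt_min hτ₁ hτ₂
  -- basic measure computation for single coordinates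
  have hP : ∀ (i : ℤ) (s : Set ℝ), MeasurableSet s →
      P (Y i ⁻¹' s) = volume (s ∩ Icc (0:ℝ) 1) := by
    intro i s hs
    rw [← Measure.map_apply (hYm i) hs, hUnif i, Measure.restrict_apply hs]
  -- main pointwise formula for large n
  have key : ∀ n : ℕ, max τ'₁ τ'₂ ≤ n →
      (P {ω | (Z₁ 1 ω ≤ u₁ n ∧ u₁ n < Z₁ 2 ω) ∧ (Z₂ 1 ω ≤ u₂ n ∧ u₂ n < Z₂ 2 ω)}).toReal =
        (u₁ n)^2 * (min (u₁ n) (u₂ n)) *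
          ((1 - max (u₁ n) (u₂ n)) + max (u₁ n - u₂ n) 0 * (1 - u₁ n)) := by
    intro n hn
    have hn0 : (0:ℝ) < n := lt_of_lt_of_le (lt_sup_iff.mpr (Or.inl hτ₁)) hn
    set a := u₁ n with ha
    set b := u₂ n with hb
    have ha0 : 0 ≤ a := by
      rw [ha, hu₁]
      have : τ'₁ / n ≤ 1 := by
        rw [div_le_one hn0]; exact le_trans (le_max_left _ _) hn
      linarith
    have ha1 : a ≤ 1 := by
      rw [ha, hu₁]; have : 0 ≤ τ'₁ / n := by positivity
      linarith
    have hb0 : 0 ≤ b := by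
      rw [hb, hu₂]
      have : τ'₂ / n ≤ 1 := by
        rw [div_le_one hn0]; exact le_trans (le_max_right _ _) hn
      linarith
    have hb1 : b ≤ 1 := by
      rw [hb, hu₂]; have : 0 ≤ τ'₂ / n := by positivity
      linarith
    have hE : {ω | (Z₁ 1 ω ≤ a ∧ a < Z₁ 2 ω) ∧ (Z₂ 1 ω ≤ b ∧ b < Z₂ 2 ω)} =
        (Y (-2) ⁻¹' Iic a ∩ (Y (-1) ⁻¹' Iic a ∩ (Y 1 ⁻¹' Iic (min a b) ∩
          Y 2 ⁻¹' Ioi (max a b)))) ∪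
        (Y (-2) ⁻¹' Iic a ∩ (Y (-1) ⁻¹' Iic a ∩ (Y 0 ⁻¹' Ioi a ∩ (Y 1 ⁻¹' Iic (min a b) ∩
          Y 2 ⁻¹' Ioc b a)))) := by
      ext ω
      simp only [hZ₁, hZ₂, mem_setOf_eq, mem_union, mem_inter_iff, mem_preimage, mem_Iic,
        mem_Ioi, mem_Ioc, max_le_iff, lt_max_iff, le_min_iff, max_lt_iff]
      norm_num
      constructor
      · rintro ⟨⟨⟨h1a, hm1, hm2⟩, hor⟩, h1b, h2b⟩
        rcases hor with h | h | h
        · exact Or.inl ⟨hm2, hm1, ⟨h1a, h1b⟩, h, h2b⟩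
        · rcases le_or_gt (Y 2 ω) a with h5 | h5
          · exact Or.inr ⟨hm2, hm1, h, ⟨h1a, h1b⟩, h2b, h5⟩
          · exact Or.inl ⟨hm2, hm1, ⟨h1a, h1b⟩, h5, h2b⟩
        · exact absurd h (not_lt.mpr hm1)
      · rintro (⟨hm2, hm1, ⟨h1a, h1b⟩, h2, h2b⟩ | ⟨hm2, hm1, h0, ⟨h1a, h1b⟩, h2b, h2a⟩)
        · exact ⟨⟨⟨h1a, hm1, hm2⟩, Or.inl h2⟩, h1b, h2b⟩
        · exact ⟨⟨⟨h1a, hm1, hm2⟩, Or.inr (Or.inl h0)⟩, h1b, h2b⟩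
    rw [hE]
    have hmeas2 : MeasurableSet (Y (-2) ⁻¹' Iic a ∩ (Y (-1) ⁻¹' Iic a ∩ (Y 0 ⁻¹' Ioi a ∩
        (Y 1 ⁻¹' Iic (min a b) ∩ Y 2 ⁻¹' Ioc b a)))) :=
      ((hYm _) measurableSet_Iic).inter (((hYm _) measurableSet_Iic).inter
        (((hYm _) measurableSet_Ioi).inter (((hYm _) measurableSet_Iic).inter
          ((hYm _) measurableSet_Ioc))))
    have hdisj : Disjoint
        (Y (-2) ⁻¹' Iic a ∩ (Y (-1) ⁻¹' Iic a ∩ (Y 1 ⁻¹' Iic (min a b) ∩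
          Y 2 ⁻¹' Ioi (max a b))))
        (Y (-2) ⁻¹' Iic a ∩ (Y (-1) ⁻¹' Iic a ∩ (Y 0 ⁻¹' Ioi a ∩ (Y 1 ⁻¹' Iic (min a b) ∩
          Y 2 ⁻¹' Ioc b a)))) := by
      rw [Set.disjoint_left]
      rintro ω ⟨-, -, -, h2⟩ ⟨-, -, -, -, h2'⟩
      exact absurd (h2 : max a b < Y 2 ω)
        (not_lt.mpr (le_trans (h2' : Y 2 ω ∈ Ioc b a).2 (le_max_left a b)))
    rw [measure_union hdisj hmeas2, ENNReal.toReal_add (measure_ne_top P _) (measure_ne_top P _)]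
    have hA : P (Y (-2) ⁻¹' Iic a ∩ (Y (-1) ⁻¹' Iic a ∩ (Y 1 ⁻¹' Iic (min a b) ∩
        Y 2 ⁻¹' Ioi (max a b)))) =
        P (Y (-2) ⁻¹' Iic a) * (P (Y (-1) ⁻¹' Iic a) * (P (Y 1 ⁻¹' Iic (min a b)) *
          P (Y 2 ⁻¹' Ioi (max a b)))) := by
      have := hIndep.measure_inter_preimage_eq_mul (S := ({-2,-1,1,2} : Finset ℤ))
        (sets := fun i => if i = 2 then Ioi (max a b) else if i = 1 then Iic (min a b) else Iic a)
        (fun i _ => by split_ifs <;> first | exact measurableSet_Ioi | exact measurableSet_Iic)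
      simpa [Finset.set_biInter_insert, Finset.prod_insert, Finset.mem_insert,
        Finset.mem_singleton] using this
    have hB : P (Y (-2) ⁻¹' Iic a ∩ (Y (-1) ⁻¹' Iic a ∩ (Y 0 ⁻¹' Ioi a ∩
        (Y 1 ⁻¹' Iic (min a b) ∩ Y 2 ⁻¹' Ioc b a)))) =
        P (Y (-2) ⁻¹' Iic a) * (P (Y (-1) ⁻¹' Iic a) * (P (Y 0 ⁻¹' Ioi a) *
          (P (Y 1 ⁻¹' Iic (min a b)) * P (Y 2 ⁻¹' Ioc b a)))) := by
      have := hIndep.measure_inter_preimage_eq_mul (S := ({-2,-1,0,1,2} : Finset ℤ))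
        (sets := fun i => if i = 2 then Ioc b a else if i = 1 then Iic (min a b) else
          if i = 0 then Ioi a else Iic a)
        (fun i _ => by split_ifs <;>
          first | exact measurableSet_Ioc | exact measurableSet_Ioi | exact measurableSet_Iic)
      simpa [Finset.set_biInter_insert, Finset.prod_insert, Finset.mem_insert,
        Finset.mem_singleton] using this
    have vIic : ∀ u : ℝ, 0 ≤ u → u ≤ 1 → volume (Iic u ∩ Icc (0:ℝ) 1) = ENNReal.ofReal u := by
      intro u h0 h1
      have he : Iic u ∩ Icc (0:ℝ) 1 = Icc 0 u := by
        ext x; simp only [mem_inter_iff, mem_Iic, mem_Icc]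
        constructor
        · rintro ⟨hx, hx0, -⟩; exact ⟨hx0, hx⟩
        · rintro ⟨hx0, hxu⟩; exact ⟨hxu, hx0, le_trans hxu h1⟩
      rw [he, Real.volume_Icc]; norm_num
    have vIoi : ∀ u : ℝ, 0 ≤ u → volume (Ioi u ∩ Icc (0:ℝ) 1) = ENNReal.ofReal (1 - u) := by
      intro u h0
      have he : Ioi u ∩ Icc (0:ℝ) 1 = Ioc u 1 := by
        ext x; simp only [mem_inter_iff, mem_Ioi, mem_Icc, mem_Ioc]
        constructor
        · rintro ⟨hx, -, hx1⟩; exact ⟨hx, hx1⟩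
        · rintro ⟨hx, hx1⟩; exact ⟨hx, le_trans h0 hx.le, hx1⟩
      rw [he, Real.volume_Ioc]
    have vIoc : volume (Ioc b a ∩ Icc (0:ℝ) 1) = ENNReal.ofReal (a - b) := by
      have he : Ioc b a ∩ Icc (0:ℝ) 1 = Ioc b a :=
        inter_eq_left.mpr fun x hx => ⟨le_trans hb0 hx.1.le, le_trans hx.2 ha1⟩
      rw [he, Real.volume_Ioc]
    have hmin0 : 0 ≤ min a b := le_min ha0 hb0
    have hmin1 : min a b ≤ 1 := le_trans (min_le_left _ _) ha1
    have hmax0 : 0 ≤ max a b := le_trans ha0 (le_max_left _ _)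
    have hmax1 : max a b ≤ 1 := max_le ha1 hb1
    have e1 : P (Y (-2) ⁻¹' Iic a) = ENNReal.ofReal a := by
      rw [hP _ _ measurableSet_Iic, vIic a ha0 ha1]
    have e2 : P (Y (-1) ⁻¹' Iic a) = ENNReal.ofReal a := by
      rw [hP _ _ measurableSet_Iic, vIic a ha0 ha1]
    have e3 : P (Y 1 ⁻¹' Iic (min a b)) = ENNReal.ofReal (min a b) := by
      rw [hP _ _ measurableSet_Iic, vIic _ hmin0 hmin1]
    have e4 : P (Y 2 ⁻¹' Ioi (max a b)) = ENNReal.ofReal (1 - max a b) := by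
      rw [hP _ _ measurableSet_Ioi, vIoi _ hmax0]
    have e5 : P (Y 0 ⁻¹' Ioi a) = ENNReal.ofReal (1 - a) := by
      rw [hP _ _ measurableSet_Ioi, vIoi _ ha0]
    have e6 : P (Y 2 ⁻¹' Ioc b a) = ENNReal.ofReal (a - b) := by
      rw [hP _ _ measurableSet_Ioc, vIoc]
    rw [hA, hB, e1, e2, e3, e4, e5, e6]
    simp only [ENNReal.toReal_mul, ENNReal.toReal_ofReal ha0,
      ENNReal.toReal_ofReal hmin0, ENNReal.toReal_ofReal (sub_nonneg.mpr hmax1),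
      ENNReal.toReal_ofReal (sub_nonneg.mpr ha1)]
    rcases le_total b a with hba | hba
    · rw [ENNReal.toReal_ofReal (sub_nonneg.mpr hba), max_eq_left (sub_nonneg.mpr hba)]
      ring
    · rw [ENNReal.ofReal_eq_zero.mpr (by linarith), max_eq_right (by linarith : a - b ≤ 0)]
      simp
      ring
  -- the rescaled formula
  have key2 : ∀ n : ℕ, max τ'₁ τ'₂ ≤ n →
      (n : ℝ) * ((u₁ n)^2 * (min (u₁ n) (u₂ n)) *
          ((1 - max (u₁ n) (u₂ n)) + max (u₁ n - u₂ n) 0 * (1 - u₁ n))) =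
        (u₁ n)^2 * (min (u₁ n) (u₂ n)) *
          (min τ'₁ τ'₂ + max (τ'₂ - τ'₁) 0 * (τ'₁ / n)) := by
    intro n hn
    have hn0 : (0:ℝ) < n := lt_of_lt_of_le (lt_sup_iff.mpr (Or.inl hτ₁)) hn
    have hne : (n:ℝ) ≠ 0 := ne_of_gt hn0
    rw [hu₁ n, hu₂ n]
    rcases le_total τ'₁ τ'₂ with h | h
    · have hd : τ'₁ / (n:ℝ) ≤ τ'₂ / n := by gcongr
      rw [max_eq_left (by linarith), min_eq_left h, max_eq_left (by linarith),
        max_eq_left (by linarith)]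
      field_simp
      ring
    · have hd : τ'₂ / (n:ℝ) ≤ τ'₁ / n := by gcongr
      rw [max_eq_right (by linarith), min_eq_right h, max_eq_right (by linarith),
        max_eq_right (by linarith)]
      field_simp
      ring
  have hlim : Tendsto (fun n : ℕ => (u₁ n)^2 * (min (u₁ n) (u₂ n)) *
      (min τ'₁ τ'₂ + max (τ'₂ - τ'₁) 0 * (τ'₁ / n))) atTop (nhds (min τ'₁ τ'₂)) := by
    have h1 : Tendsto (fun n : ℕ => u₁ n) atTop (nhds 1) := by
      have := (tendsto_const_nhds (x := (1:ℝ)) (f := atTop)).sub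
        (tendsto_const_div_atTop_nhds_zero_nat τ'₁)
      simpa using this.congr fun n => (hu₁ n).symm
    have h2 : Tendsto (fun n : ℕ => u₂ n) atTop (nhds 1) := by
      have := (tendsto_const_nhds (x := (1:ℝ)) (f := atTop)).sub
        (tendsto_const_div_atTop_nhds_zero_nat τ'₂)
      simpa using this.congr fun n => (hu₂ n).symm
    have h3 : Tendsto (fun n : ℕ => τ'₁ / (n:ℝ)) atTop (nhds 0) :=
      tendsto_const_div_atTop_nhds_zero_nat τ'₁
    have := (((h1.pow 2).mul (h1.min h2)).mul
      ((tendsto_const_nhds (x := min τ'₁ τ'₂)).add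
        ((tendsto_const_nhds (x := max (τ'₂ - τ'₁) 0)).mul h3)))
    simpa using this
  refine Tendsto.congr' ?_ hlim
  filter_upwards [eventually_ge_atTop ⌈max τ'₁ τ'₂⌉₊] with n hn
  have hn' : max τ'₁ τ'₂ ≤ n := le_trans (Nat.le_ceil _) (by exact_mod_cast hn)
  rw [← key2 n hn', ← key n hn']
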